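/- Let β be a cardinal with 1 < β ≤ α, let G be one of the Grassmannians G_β(V) or G^β(V), and let f : G → G be a bijection such that both f and f⁻¹ map every apartment of G onto an apartment of G. Then f is an automorphism of the Grassmann graph Γ(G): for all X, Y ∈ G, X and Y are adjacent if and only if f(X) and f(Y) are adjacent. -/

import Mathlib

/- Setting: `V` is a left vector space over a division ring `K` whose dimension
`α = Module.rank K V` is an infinite cardinal. -/

universe u v w

section Defs

variable (K : Type u) (V : Type v) [DivisionRing K] [AddCommGroup V] [Module K V]

/-- `B ⊆ V` is a basis of `V`, given as a set of vectors. -/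
def IsBasisSet (B : Set V) : Prop :=
  LinearIndependent K ((↑) : B → V) ∧ Submodule.span K B = ⊤

/-- The Grassmannian `G_β(V)`: all subspaces of dimension `β` and codimension `α`. -/
def Gsub (β : Cardinal.{v}) : Set (Submodule K V) :=
  {X | Module.rank K ↥X = β ∧ Module.rank K (V ⧸ X) = Module.rank K V}

/-- The Grassmannian `G^β(V)`: all subspaces of dimension `α` and codimension `β`. -/
def Gsup (β : Cardinal.{v}) : Set (Submodule K V) :=
  {X | Module.rank K ↥X = Module.rank K V ∧ Module.rank K (V ⧸ X) = β}

/-- The apartment of a Grassmannian `G` defined by a basis `B`: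
all elements of `G` spanned by subsets of `B`. -/
def apartmentOf (G : Set (Submodule K V)) (B : Set V) : Set (Submodule K V) :=
  {X | X ∈ G ∧ ∃ S ⊆ B, X = Submodule.span K S}

/-- `X` and `Y` are adjacent: `X ∩ Y` has codimension 1 in both `X` and `Y`,
i.e. `dim X/(X∩Y) = dim Y/(X∩Y) = 1`. -/
def AdjacentSub (X Y : Submodule K V) : Prop :=
  Module.rank K (↥X ⧸ Submodule.comap X.subtype (X ⊓ Y)) = 1 ∧
  Module.rank K (↥Y ⧸ Submodule.comap Y.subtype (X ⊓ Y)) = 1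

end Defs

namespace S9
open Submodule Set Cardinal

variable {K : Type u} {V : Type v} [DivisionRing K] [AddCommGroup V] [Module K V]

/-- The basis associated to a basis set. -/
noncomputable def bas {B : Set V} (hB : IsBasisSet K V B) : Module.Basis B K V :=
  Module.Basis.mk hB.1 (by rw [Subtype.range_coe]; exact hB.2.ge)

lemma bas_apply {B : Set V} (hB : IsBasisSet K V B) (i : B) : bas hB i = ↑i :=
  Module.Basis.mk_apply _ _ _

lemma card_bas {B : Set V} (hB : IsBasisSet K V B) : #B = Module.rank K V :=
  (bas hB).mk_eq_rank''

/-- Membership in the span of a subset of a basis, via coordinate supports. -/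
lemma mem_span_sub {B : Set V} (hB : IsBasisSet K V B) {S : Set V} (hS : S ⊆ B) (x : V) :
    x ∈ span K S ↔ ∀ i : B, (bas hB).repr x i ≠ 0 → ↑i ∈ S := by
  constructor
  · intro hx
    have hle : span K S ≤ Submodule.comap ((bas hB).repr.toLinearMap)
        (Finsupp.supported K K {i : B | ↑i ∈ S}) := by
      rw [span_le]
      intro v hv
      have hvB : v ∈ B := hS hv
      have hv' : v = bas hB ⟨v, hvB⟩ := (bas_apply hB ⟨v, hvB⟩).symm
      simp only [SetLike.mem_coe, Submodule.mem_comap, LinearEquiv.coe_toLinearMap]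
      rw [hv', Module.Basis.repr_self, Finsupp.mem_supported]
      intro i hi
      rcases Finset.mem_singleton.1 (Finsupp.support_single_subset hi) with rfl
      exact hv
    have h2 := hle hx
    simp only [Submodule.mem_comap, LinearEquiv.coe_toLinearMap, Finsupp.mem_supported] at h2
    intro i hi
    exact h2 (Finsupp.mem_support_iff.2 hi)
  · intro h
    have hx : (Finsupp.linearCombination K ⇑(bas hB)) ((bas hB).repr x) = x :=
      (bas hB).linearCombination_repr x
    rw [← hx, Finsupp.linearCombination_apply, Finsupp.sum]
    refine Submodule.sum_mem _ fun i hi => ?_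
    refine Submodule.smul_mem _ _ (Submodule.subset_span ?_)
    rw [bas_apply]
    exact h i (Finsupp.mem_support_iff.1 hi)

lemma mem_span_mem_basis {B : Set V} (hB : IsBasisSet K V B) {S : Set V} (hS : S ⊆ B)
    {v : V} (hv : v ∈ B) : v ∈ span K S ↔ v ∈ S := by
  constructor
  · intro h
    have h1 := (mem_span_sub hB hS v).1 h ⟨v, hv⟩
    have h2 : (bas hB).repr (bas hB ⟨v, hv⟩) ⟨v, hv⟩ = 1 := by
      rw [Module.Basis.repr_self]; simp
    rw [bas_apply] at h2
    exact h1 (by rw [h2]; exact one_ne_zero)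
  · exact fun h => Submodule.subset_span h

lemma span_inj {B : Set V} (hB : IsBasisSet K V B) {S T : Set V} (hS : S ⊆ B) (hT : T ⊆ B)
    (h : span K S = span K T) : S = T := by
  ext v
  constructor
  · intro hv
    exact (mem_span_mem_basis hB hT (hS hv)).1 (h ▸ Submodule.subset_span hv)
  · intro hv
    exact (mem_span_mem_basis hB hS (hT hv)).1 (h.symm ▸ Submodule.subset_span hv)

lemma span_inf {B : Set V} (hB : IsBasisSet K V B) {S T : Set V} (hS : S ⊆ B) (hT : T ⊆ B) :
    span K S ⊓ span K T = span K (S ∩ T) := by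
  have hST : S ∩ T ⊆ B := (inter_subset_left).trans hS
  ext x
  simp only [Submodule.mem_inf, mem_span_sub hB hS x, mem_span_sub hB hT x,
    mem_span_sub hB hST x, Set.mem_inter_iff]
  constructor
  · rintro ⟨h1, h2⟩ i hi; exact ⟨h1 i hi, h2 i hi⟩
  · intro h; exact ⟨fun i hi => (h i hi).1, fun i hi => (h i hi).2⟩

lemma rank_span_sub {B : Set V} (hB : IsBasisSet K V B) {S : Set V} (hS : S ⊆ B) :
    Module.rank K ↥(span K S) = #S :=
  rank_span_set ((show LinearIndepOn K id B from hB.1).mono hS)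

lemma isCompl_span {B : Set V} (hB : IsBasisSet K V B) {S : Set V} (hS : S ⊆ B) :
    IsCompl (span K S) (span K (B \ S)) := by
  constructor
  · rw [disjoint_iff, span_inf hB hS diff_subset]
    have : S ∩ (B \ S) = ∅ := by ext v; simp
    rw [this, Submodule.span_empty]
  · rw [codisjoint_iff, ← Submodule.span_union]
    rw [Set.union_diff_cancel hS, hB.2]

lemma rank_quot_span {B : Set V} (hB : IsBasisSet K V B) {S : Set V} (hS : S ⊆ B) :
    Module.rank K (V ⧸ span K S) = #(B \ S : Set V) := by
  rw [(Submodule.quotientEquivOfIsCompl _ _ (isCompl_span hB hS)).rank_eq]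
  exact rank_span_sub hB diff_subset

/-- rank of `span S / span S'` for `S' ⊆ S ⊆ B`. -/
lemma rank_comap_quot {B : Set V} (hB : IsBasisSet K V B) {S' S : Set V} (hS : S ⊆ B)
    (h' : S' ⊆ S) :
    Module.rank K (↥(span K S) ⧸ comap (span K S).subtype (span K S')) = #(S \ S' : Set V) := by
  set p := comap (span K S).subtype (span K S')
  set q := comap (span K S).subtype (span K (S \ S'))
  have h'B : S' ⊆ B := h'.trans hS
  have hd : S \ S' ⊆ B := diff_subset.trans hS
  have hcompl : IsCompl p q := by
    constructor
    · rw [disjoint_iff, ← Submodule.comap_inf, span_inf hB h'B hd]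
      have : S' ∩ (S \ S') = ∅ := by ext v; simp
      rw [this, Submodule.span_empty, Submodule.comap_bot, Submodule.ker_subtype]
    · rw [codisjoint_iff, eq_top_iff]
      rintro ⟨z, hz⟩ -
      have hz' : z ∈ span K S' ⊔ span K (S \ S') := by
        rw [← Submodule.span_union, Set.union_diff_cancel h']
        exact hz
      rcases Submodule.mem_sup.1 hz' with ⟨a, ha, b, hb, rfl⟩
      have haS : a ∈ span K S := Submodule.span_mono h' ha
      have hbS : b ∈ span K S := Submodule.span_mono diff_subset hb
      refine Submodule.mem_sup.2 ⟨⟨a, haS⟩, ?_, ⟨b, hbS⟩, ?_, rfl⟩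
      · exact ha
      · exact hb
  rw [(Submodule.quotientEquivOfIsCompl _ _ hcompl).rank_eq,
    (Submodule.comapSubtypeEquivOfLe (Submodule.span_mono (diff_subset))).rank_eq]
  exact rank_span_sub hB hd


lemma exists_split (s : Set V) (κ lam : Cardinal.{v}) (h : #s = κ + lam) :
    ∃ P, P ⊆ s ∧ #P = κ ∧ #(s \ P : Set V) = lam := by
  have h2 : #s = #(κ.out ⊕ lam.out) := by
    rw [Cardinal.mk_sum]; simp [Cardinal.mk_out]; exact h
  obtain ⟨e⟩ := Cardinal.eq.1 h2
  have hpre : ∀ A : Set (κ.out ⊕ lam.out), #(⇑e ⁻¹' A : Set s) = #A := fun A =>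
    Cardinal.mk_preimage_of_injective_of_subset_range ⇑e A e.injective
      (by rw [Equiv.range_eq_univ]; exact subset_univ _)
  refine ⟨(↑) '' (e ⁻¹' (Set.range Sum.inl)), by rintro _ ⟨w, _, rfl⟩; exact w.2, ?_, ?_⟩
  · rw [Cardinal.mk_image_eq Subtype.val_injective, hpre,
      Cardinal.mk_range_eq _ Sum.inl_injective, Cardinal.mk_out]
  · have hset : s \ ((↑) '' (e ⁻¹' (Set.range Sum.inl))) = (↑) '' (e ⁻¹' (Set.range Sum.inr)) := by
      ext z
      constructor
      · rintro ⟨hzs, hz⟩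
        rcases hsum : e ⟨z, hzs⟩ with a | b
        · exact absurd ⟨⟨z, hzs⟩, Set.mem_preimage.2 ⟨a, hsum.symm⟩, rfl⟩ hz
        · exact ⟨⟨z, hzs⟩, Set.mem_preimage.2 ⟨b, hsum.symm⟩, rfl⟩
      · rintro ⟨w, hw, rfl⟩
        refine ⟨w.2, ?_⟩
        rintro ⟨w', hw', hww⟩
        have hww' : w' = w := Subtype.val_injective hww
        subst hww'
        rcases hw with ⟨b, hb⟩; rcases hw' with ⟨a, ha⟩
        rw [← hb] at ha
        exact Sum.inl_ne_inr ha
    rw [hset, Cardinal.mk_image_eq Subtype.val_injective, hpre,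
      Cardinal.mk_range_eq _ Sum.inr_injective, Cardinal.mk_out]

lemma mk_diff_of_lt {s t : Set V} (hts : t ⊆ s) (hinf : ℵ₀ ≤ #s) (hfin : #t < #s) :
    #(s \ t : Set V) = #s := by
  have hsum := Cardinal.mk_diff_add_mk hts
  by_contra hne
  have hlt : #(s \ t : Set V) < #s :=
    lt_of_le_of_ne (Cardinal.mk_le_mk_of_subset diff_subset) hne
  exact absurd hsum (ne_of_lt (Cardinal.add_lt_of_lt hinf hlt hfin))

private lemma exists_subset_card_core {μ ν : Cardinal.{v}} {B F1 F2 : Set V}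
    (hBinf : ℵ₀ ≤ #B) (hsum : μ + ν = #B) (hF1 : F1 ⊆ B) (hF2 : F2 ⊆ B)
    (hd : Disjoint F1 F2) (h1 : #F1 < ℵ₀) (h2 : #F2 < ℵ₀) (hle1 : #F1 ≤ μ) (hle2 : #F2 ≤ ν)
    (hμν : μ ≤ ν) :
    ∃ S, F1 ⊆ S ∧ S ⊆ B ∧ Disjoint S F2 ∧ #S = μ ∧ #(B \ S : Set V) = ν := by
  have hνinf : ℵ₀ ≤ ν := by
    by_contra hv
    push_neg at hv
    have hlt : μ + ν < ℵ₀ := Cardinal.add_lt_aleph0 (lt_of_le_of_lt hμν hv) hv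
    rw [hsum] at hlt
    exact absurd hBinf (not_le.2 hlt)
  -- μ₀ with μ₀ + #F1 = μ
  obtain ⟨μ₀, hμ₀, hμ₀le⟩ : ∃ μ₀, μ₀ + #F1 = μ ∧ μ₀ ≤ μ := by
    rcases lt_or_ge μ ℵ₀ with hfin | hinf
    · obtain ⟨n, rfl⟩ := Cardinal.lt_aleph0.1 hfin
      obtain ⟨m, hm⟩ := Cardinal.lt_aleph0.1 h1
      have hmn : m ≤ n := by
        have := hle1; rw [hm] at this; exact_mod_cast this
      refine ⟨↑(n - m), ?_, ?_⟩
      · rw [hm, ← Nat.cast_add, Nat.sub_add_cancel hmn]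
      · exact_mod_cast Nat.sub_le n m
    · exact ⟨μ, Cardinal.add_eq_left hinf hle1, le_refl _⟩
  set B₀ := B \ (F1 ∪ F2) with hB₀
  have hF12 : #(F1 ∪ F2 : Set V) < ℵ₀ := by
    apply lt_of_le_of_lt (Cardinal.mk_union_le _ _)
    exact Cardinal.add_lt_aleph0 h1 h2
  have hB₀card : #B₀ = #B :=
    mk_diff_of_lt (union_subset hF1 hF2) hBinf (lt_of_lt_of_le hF12 hBinf)
  have hsplitcard : #B₀ = μ₀ + ν := by
    rw [hB₀card, ← hsum, ← hμ₀]
    rw [add_assoc, Cardinal.add_eq_right hνinf (h1.le.trans hνinf)]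
  obtain ⟨P, hPB₀, hPcard, hPc⟩ := exists_split B₀ μ₀ ν hsplitcard
  have hPB : P ⊆ B := hPB₀.trans diff_subset
  have hPF1 : Disjoint P F1 := by
    rw [Set.disjoint_left]
    intro z hz hz1
    exact (hPB₀ hz).2 (Or.inl hz1)
  have hPF2 : Disjoint P F2 := by
    rw [Set.disjoint_left]
    intro z hz hz2
    exact (hPB₀ hz).2 (Or.inr hz2)
  refine ⟨F1 ∪ P, subset_union_left, union_subset hF1 hPB, ?_, ?_, ?_⟩
  · exact Set.disjoint_union_left.2 ⟨hd, hPF2⟩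
  · rw [Cardinal.mk_union_of_disjoint hPF1.symm, hPcard, ← hμ₀]; exact add_comm _ _
  · have hBS : B \ (F1 ∪ P) = F2 ∪ (B₀ \ P) := by
      ext z
      simp only [Set.mem_diff, Set.mem_union, hB₀]
      constructor
      · rintro ⟨hzB, hz⟩
        push_neg at hz
        by_cases hz2 : z ∈ F2
        · exact Or.inl hz2
        · exact Or.inr ⟨⟨hzB, fun h => h.elim hz.1 hz2⟩, hz.2⟩
      · rintro (hz2 | ⟨⟨hzB, hz⟩, hzP⟩)
        · exact ⟨hF2 hz2, fun h => h.elim (fun h1 => (Set.disjoint_left.mp hd h1) hz2)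
            (fun hP => (Set.disjoint_left.mp hPF2 hP) hz2)⟩
        · exact ⟨hzB, fun h => h.elim (fun h1 => hz (Or.inl h1)) hzP⟩
    rw [hBS, Cardinal.mk_union_of_disjoint, hPc]
    · exact Cardinal.add_eq_right hνinf hle2
    · rw [Set.disjoint_left]
      intro z hz2 hz
      exact (diff_subset hz).2 (Or.inr hz2)

lemma exists_subset_card {μ ν : Cardinal.{v}} {B F1 F2 : Set V}
    (hBinf : ℵ₀ ≤ #B) (hsum : μ + ν = #B) (hF1 : F1 ⊆ B) (hF2 : F2 ⊆ B)
    (hd : Disjoint F1 F2) (h1 : #F1 < ℵ₀) (h2 : #F2 < ℵ₀) (hle1 : #F1 ≤ μ) (hle2 : #F2 ≤ ν) :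
    ∃ S, F1 ⊆ S ∧ S ⊆ B ∧ Disjoint S F2 ∧ #S = μ ∧ #(B \ S : Set V) = ν := by
  rcases le_total μ ν with hμν | hνμ
  · exact exists_subset_card_core hBinf hsum hF1 hF2 hd h1 h2 hle1 hle2 hμν
  · obtain ⟨S', hF2S', hS'B, hS'F1, hS'card, hS'c⟩ :=
      exists_subset_card_core hBinf (by rw [add_comm]; exact hsum) hF2 hF1 hd.symm h2 h1 hle2 hle1 hνμ
    refine ⟨B \ S', ?_, diff_subset, ?_, hS'c, ?_⟩
    · intro z hz
      exact ⟨hF1 hz, fun h => (Set.disjoint_left.mp hS'F1 h) hz⟩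
    · rw [Set.disjoint_left]
      rintro z ⟨_, hz⟩ hz2
      exact hz (hF2S' hz2)
    · rw [Set.diff_diff_cancel_left hS'B, hS'card]


/-! ### Context: the Grassmannian `G` with parameters μ ν -/

def GoodG (G : Set (Submodule K V)) (μ ν : Cardinal.{v}) : Prop :=
  (∀ X : Submodule K V, X ∈ G ↔ (Module.rank K ↥X = μ ∧ Module.rank K (V ⧸ X) = ν)) ∧
  2 ≤ μ ∧ 2 ≤ ν ∧ μ + ν = Module.rank K V ∧ ℵ₀ ≤ Module.rank K V

variable {G : Set (Submodule K V)} {μ ν : Cardinal.{v}}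

lemma card_pair_lt (a b : V) : #({a, b} : Set V) < ℵ₀ :=
  (Set.Finite.insert a (finite_singleton b)).lt_aleph0

lemma card_pair_le (a b : V) : #({a, b} : Set V) ≤ 2 := by
  apply le_trans (Cardinal.mk_insert_le)
  rw [Cardinal.mk_singleton]
  exact le_of_eq (one_add_one_eq_two)

lemma card_singleton_lt (a : V) : #({a} : Set V) < ℵ₀ := (finite_singleton a).lt_aleph0

lemma card_singleton_le_two (a : V) : #({a} : Set V) ≤ 2 := by
  rw [Cardinal.mk_singleton]; exact one_le_two

lemma exists_ne_of_two_le {s : Set V} (h : 2 ≤ #s) (x : V) : ∃ y ∈ s, y ≠ x := by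
  by_contra hc
  push_neg at hc
  have hsub : s ⊆ {x} := fun y hy => hc y hy
  have : (2 : Cardinal) ≤ 1 := by
    calc (2 : Cardinal) ≤ #s := h
    _ ≤ #({x} : Set V) := Cardinal.mk_le_mk_of_subset hsub
    _ = 1 := Cardinal.mk_singleton x
  norm_num at this

lemma span_mem_G (hGG : GoodG G μ ν) {B : Set V} (hB : IsBasisSet K V B) {S : Set V}
    (hS : S ⊆ B) : span K S ∈ G ↔ (#S = μ ∧ #(B \ S : Set V) = ν) := by
  rw [hGG.1, rank_span_sub hB hS, rank_quot_span hB hS]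

lemma mem_apartment_iff (hGG : GoodG G μ ν) {B : Set V} (hB : IsBasisSet K V B)
    {X : Submodule K V} :
    X ∈ apartmentOf K V G B ↔
      ∃ S, S ⊆ B ∧ X = span K S ∧ #S = μ ∧ #(B \ S : Set V) = ν := by
  constructor
  · rintro ⟨hXG, S, hSB, rfl⟩
    exact ⟨S, hSB, rfl, (span_mem_G hGG hB hSB).1 hXG⟩
  · rintro ⟨S, hSB, rfl, hcard⟩
    exact ⟨(span_mem_G hGG hB hSB).2 hcard, S, hSB, rfl⟩

lemma apartment_subset (hB : IsBasisSet K V B) : apartmentOf K V G B ⊆ G := fun _ h => h.1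

/-- The trace of `X` on a basis `B`. -/
def tr (B : Set V) (X : Submodule K V) : Set V := {v ∈ B | v ∈ X}

lemma tr_subset (B : Set V) (X : Submodule K V) : tr B X ⊆ B := fun _ h => h.1

lemma tr_span {B : Set V} (hB : IsBasisSet K V B) {S : Set V} (hS : S ⊆ B) :
    tr B (span K S) = S := by
  ext v
  constructor
  · rintro ⟨hvB, hv⟩
    exact (mem_span_mem_basis hB hS hvB).1 hv
  · intro hv
    exact ⟨hS hv, Submodule.subset_span hv⟩

lemma span_tr {B : Set V} (hB : IsBasisSet K V B) {X : Submodule K V}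
    (hX : X ∈ apartmentOf K V G B) : X = span K (tr B X) := by
  obtain ⟨-, S, hSB, rfl⟩ := hX
  rw [tr_span hB hSB]

lemma mem_tr_iff {B : Set V} {X : Submodule K V} {v : V} (hv : v ∈ B) :
    v ∈ tr B X ↔ v ∈ X := by
  constructor
  · exact fun h => h.2
  · exact fun h => ⟨hv, h⟩

lemma exists_mem_apartment (hGG : GoodG G μ ν) {B : Set V} (hB : IsBasisSet K V B)
    {F1 F2 : Set V} (hF1 : F1 ⊆ B) (hF2 : F2 ⊆ B) (hd : Disjoint F1 F2)
    (h1 : #F1 < ℵ₀) (h2 : #F2 < ℵ₀) (hle1 : #F1 ≤ μ) (hle2 : #F2 ≤ ν) :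
    ∃ X ∈ apartmentOf K V G B, (∀ v ∈ F1, v ∈ X) ∧ ∀ v ∈ F2, v ∉ X := by
  have hBcard : #B = Module.rank K V := card_bas hB
  have hBinf : ℵ₀ ≤ #B := by rw [hBcard]; exact hGG.2.2.2.2
  have hsum : μ + ν = #B := by rw [hBcard]; exact hGG.2.2.2.1
  obtain ⟨S, hF1S, hSB, hSF2, hScard, hSc⟩ :=
    exists_subset_card hBinf hsum hF1 hF2 hd h1 h2 hle1 hle2
  refine ⟨span K S, (mem_apartment_iff hGG hB).2 ⟨S, hSB, rfl, hScard, hSc⟩, ?_, ?_⟩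
  · exact fun v hv => Submodule.subset_span (hF1S hv)
  · intro v hv hvX
    exact (Set.disjoint_right.mp hSF2 hv) ((mem_span_mem_basis hB hSB (hF2 hv)).1 hvX)

/-! ### Adapted bases for adjacent pairs -/

lemma exists_gen_of_rank_quot_one {X Y : Submodule K V}
    (h : Module.rank K (↥X ⧸ comap X.subtype (X ⊓ Y)) = 1) :
    ∃ x : V, x ∈ X ∧ x ∉ Y ∧ ∀ z ∈ X, ∃ c : K, z - c • x ∈ X ⊓ Y := by
  set N := comap X.subtype (X ⊓ Y) with hN
  have hpos : 0 < Module.rank K (↥X ⧸ N) := by rw [h]; norm_num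
  obtain ⟨q, hq⟩ := rank_pos_iff_exists_ne_zero.1 hpos
  obtain ⟨x₀, rfl⟩ := Submodule.Quotient.mk_surjective N q
  have hx₀N : x₀ ∉ N := fun hc => hq ((Submodule.Quotient.mk_eq_zero N).2 hc)
  have hxY : (x₀ : V) ∉ Y := by
    intro hc
    exact hx₀N (by simp [hN, Submodule.mem_comap, Submodule.mem_inf, x₀.2, hc])
  have hspan : span K {Submodule.Quotient.mk (p := N) x₀} = ⊤ := by
    by_contra hne
    obtain ⟨w, -, hw⟩ := SetLike.exists_of_lt (lt_of_le_of_ne le_top hne :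
      span K {Submodule.Quotient.mk (p := N) x₀} < ⊤)
    have hsing : LinearIndependent K (fun b : ({Submodule.Quotient.mk (p := N) x₀} : Set _) => (b : ↥X ⧸ N)) :=
      LinearIndepOn.singleton (R := K) (v := id) hq
    have hli := (show LinearIndepOn K id ({Submodule.Quotient.mk (p := N) x₀} : Set (↥X ⧸ N)) from hsing).insert (by rwa [Set.image_id])
    have hwq : w ∉ ({Submodule.Quotient.mk (p := N) x₀} : Set (↥X ⧸ N)) := by
      intro hc
      rcases hc with rfl
      exact hw (Submodule.subset_span rfl)
    have hcard : #(insert w ({Submodule.Quotient.mk (p := N) x₀} : Set (↥X ⧸ N)) : Set _) = 2 := by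
      rw [Cardinal.mk_insert hwq, Cardinal.mk_singleton, one_add_one_eq_two]
    have h2 := LinearIndependent.cardinal_le_rank hli
    rw [hcard, h] at h2
    norm_num at h2
  refine ⟨↑x₀, x₀.2, hxY, ?_⟩
  intro z hz
  have hmem : Submodule.Quotient.mk (p := N) ⟨z, hz⟩ ∈
      span K {Submodule.Quotient.mk (p := N) x₀} := by rw [hspan]; trivial
  obtain ⟨c, hc⟩ := Submodule.mem_span_singleton.1 hmem
  refine ⟨c, ?_⟩
  have : Submodule.Quotient.mk (p := N) (⟨z, hz⟩ - c • x₀) = 0 := by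
    rw [Submodule.Quotient.mk_sub, Submodule.Quotient.mk_smul, hc, sub_self]
  have hmemN := (Submodule.Quotient.mk_eq_zero N).1 this
  rw [hN, Submodule.mem_comap] at hmemN
  have hval : (X.subtype (⟨z, hz⟩ - c • x₀)) = z - c • ↑x₀ := by simp
  rwa [hval] at hmemN

lemma exists_adapted {X Y : Submodule K V} (hadj : AdjacentSub K V X Y) :
    ∃ B, IsBasisSet K V B ∧ ∃ S T x y, S ⊆ B ∧ T ⊆ B ∧ X = span K S ∧ Y = span K T ∧
      S \ T = {x} ∧ T \ S = {y} := by
  obtain ⟨x, hxX, hxY, hxgen⟩ := exists_gen_of_rank_quot_one hadj.1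
  have hadj2 : Module.rank K (↥Y ⧸ comap Y.subtype (Y ⊓ X)) = 1 := by
    rw [inf_comm]; exact hadj.2
  obtain ⟨y, hyY, hyX, hygen⟩ := exists_gen_of_rank_quot_one hadj2
  obtain ⟨C₀, hC₀sub, hC₀span, hC₀li⟩ := exists_linearIndependent K ((X ⊓ Y : Submodule K V) : Set V)
  have hspanC₀ : span K C₀ = X ⊓ Y := by rw [hC₀span, Submodule.span_eq]
  have hC₀X : C₀ ⊆ (X : Set V) := fun v hv => ((Submodule.mem_inf).1 (hC₀sub hv)).1
  have hC₀Y : C₀ ⊆ (Y : Set V) := fun v hv => ((Submodule.mem_inf).1 (hC₀sub hv)).2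
  have hxC₀ : x ∉ span K C₀ := by
    rw [hspanC₀]; exact fun hc => hxY ((Submodule.mem_inf).1 hc).2
  have hSli := (show LinearIndepOn K id C₀ from hC₀li).insert (by rwa [Set.image_id])
  have hSspan : span K (insert x C₀) = X := by
    apply le_antisymm
    · rw [Submodule.span_le, Set.insert_subset_iff]
      exact ⟨hxX, fun v hv => hC₀X hv⟩
    · intro z hz
      obtain ⟨c, hc⟩ := hxgen z hz
      have h1 : z - c • x ∈ span K (insert x C₀) :=
        Submodule.span_mono (subset_insert x C₀) (by rw [hspanC₀]; exact hc)
      have h2 : c • x ∈ span K (insert x C₀) :=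
        Submodule.smul_mem _ _ (Submodule.subset_span (mem_insert x C₀))
      simpa using Submodule.add_mem _ h1 h2
  have hTspan : span K (insert y C₀) = Y := by
    apply le_antisymm
    · rw [Submodule.span_le, Set.insert_subset_iff]
      exact ⟨hyY, fun v hv => hC₀Y hv⟩
    · intro z hz
      obtain ⟨c, hc⟩ := hygen z hz
      have h1 : z - c • y ∈ span K (insert y C₀) := by
        refine Submodule.span_mono (subset_insert y C₀) ?_
        rw [hspanC₀]
        rw [inf_comm] at hc
        exact hc
      have h2 : c • y ∈ span K (insert y C₀) :=
        Submodule.smul_mem _ _ (Submodule.subset_span (mem_insert y C₀))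
      simpa using Submodule.add_mem _ h1 h2
  have hyS : y ∉ span K (insert x C₀) := by rw [hSspan]; exact hyX
  have hDli := hSli.insert (by rwa [Set.image_id])
  set B := hDli.extend (subset_univ _) with hBdef
  have hDB : insert y (insert x C₀) ⊆ B := hDli.subset_extend _
  have hBbasis : IsBasisSet K V B := by
    constructor
    · exact hDli.linearIndepOn_extend _
    · rw [hDli.span_extend_eq_span, Submodule.span_univ]
  have hxy : x ≠ y := fun hc => hyX (hc ▸ hxX)
  have hxnC₀ : x ∉ C₀ := fun hc => hxY (hC₀Y hc)
  have hynC₀ : y ∉ C₀ := fun hc => hyX (hC₀X hc)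
  refine ⟨B, hBbasis, insert x C₀, insert y C₀, x, y, ?_, ?_, hSspan.symm, hTspan.symm, ?_, ?_⟩
  · exact (Set.subset_insert y _).trans hDB
  · refine Set.insert_subset_iff.2 ⟨hDB (mem_insert y _), ?_⟩
    exact fun v hv => hDB (Or.inr (Or.inr hv))
  · ext v
    simp only [Set.mem_diff, Set.mem_insert_iff, Set.mem_singleton_iff]
    constructor
    · rintro ⟨(rfl | hv), hvT⟩
      · rfl
      · exact absurd (Or.inr hv) hvT
    · rintro rfl
      exact ⟨Or.inl rfl, fun h => h.elim hxy (fun h => hxnC₀ h)⟩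
  · ext v
    simp only [Set.mem_diff, Set.mem_insert_iff, Set.mem_singleton_iff]
    constructor
    · rintro ⟨(rfl | hv), hvS⟩
      · rfl
      · exact absurd (Or.inr hv) hvS
    · rintro rfl
      exact ⟨Or.inl rfl, fun h => h.elim (fun h => hxy h.symm) (fun h => hynC₀ h)⟩

lemma adjacent_of_pattern {B : Set V} (hB : IsBasisSet K V B) {S T : Set V} {x y : V}
    (hS : S ⊆ B) (hT : T ⊆ B) (h1 : S \ T = {x}) (h2 : T \ S = {y}) :
    AdjacentSub K V (span K S) (span K T) := by
  have hinf : span K S ⊓ span K T = span K (S ∩ T) := span_inf hB hS hT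
  constructor
  · rw [hinf, rank_comap_quot hB hS inter_subset_left, Set.diff_self_inter, h1,
      Cardinal.mk_singleton]
  · rw [hinf, rank_comap_quot hB hT inter_subset_right, Set.diff_inter_self_eq_diff, h2,
      Cardinal.mk_singleton]

/-! ### The sets `A_{ij}` and inexactness -/

def AIJ (G : Set (Submodule K V)) (B : Set V) (i j : V) : Set (Submodule K V) :=
  {X ∈ apartmentOf K V G B | ((i : V) ∈ X → j ∈ X)}

lemma AIJ_subset_apartment {B i j} : AIJ G B i j ⊆ apartmentOf K V G B := fun _ h => h.1

lemma exists_sep (hGG : GoodG G μ ν) {B : Set V} (hB : IsBasisSet K V B) {i j : V}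
    (hi : i ∈ B) (hj : j ∈ B) (hij : i ≠ j) :
    ∃ X ∈ apartmentOf K V G B, i ∈ X ∧ j ∉ X := by
  obtain ⟨X, hX, h1, h2⟩ := exists_mem_apartment hGG hB (F1 := {i}) (F2 := {j})
    (singleton_subset_iff.2 hi) (singleton_subset_iff.2 hj)
    (disjoint_singleton.2 hij) (card_singleton_lt i) (card_singleton_lt j)
    (le_trans (card_singleton_le_two i) hGG.2.1)
    (le_trans (card_singleton_le_two j) hGG.2.2.1)
  exact ⟨X, hX, h1 i rfl, h2 j rfl⟩

lemma AIJ_not_subset (hGG : GoodG G μ ν) {B : Set V} (hB : IsBasisSet K V B) {i j k l : V}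
    (hi : i ∈ B) (hj : j ∈ B) (hk : k ∈ B) (hl : l ∈ B) (hij : i ≠ j) (hkl : k ≠ l)
    (hne : ¬(i = k ∧ j = l)) : ∃ X ∈ AIJ G B i j, k ∈ X ∧ l ∉ X := by
  by_cases hki : k = i
  · subst hki
    have hlj : l ≠ j := fun hc => hne ⟨rfl, hc.symm⟩
    obtain ⟨X, hX, h1, h2⟩ := exists_mem_apartment hGG hB (F1 := {k, j}) (F2 := {l})
      (by rw [Set.insert_subset_iff]; exact ⟨hk, singleton_subset_iff.2 hj⟩)
      (singleton_subset_iff.2 hl)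
      (by rw [Set.disjoint_right]
          rintro z rfl hz
          simp only [Set.mem_insert_iff, Set.mem_singleton_iff] at hz
          rcases hz with h | h
          · exact hkl h.symm
          · exact hlj h)
      (card_pair_lt k j) (card_singleton_lt l)
      (le_trans (card_pair_le k j) hGG.2.1)
      (le_trans (card_singleton_le_two l) hGG.2.2.1)
    exact ⟨X, ⟨hX, fun _ => h1 j (Or.inr rfl)⟩, h1 k (Or.inl rfl), h2 l rfl⟩
  · obtain ⟨X, hX, h1, h2⟩ := exists_mem_apartment hGG hB (F1 := {k}) (F2 := {l, i})
      (singleton_subset_iff.2 hk)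
      (by rw [Set.insert_subset_iff]; exact ⟨hl, singleton_subset_iff.2 hi⟩)
      (by rw [Set.disjoint_left]
          rintro z rfl hz
          simp only [Set.mem_insert_iff, Set.mem_singleton_iff] at hz
          rcases hz with h | h
          · exact hkl h
          · exact hki h)
      (card_singleton_lt k) (card_pair_lt l i)
      (le_trans (card_singleton_le_two k) hGG.2.1)
      (le_trans (card_pair_le l i) hGG.2.2.1)
    refine ⟨X, ⟨hX, fun hc => absurd hc (h2 i (Or.inr rfl))⟩, h1 k rfl, h2 l (Or.inl rfl)⟩

lemma AIJ_subset_iff (hGG : GoodG G μ ν) {B : Set V} (hB : IsBasisSet K V B) {i j k l : V}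
    (hi : i ∈ B) (hj : j ∈ B) (hk : k ∈ B) (hl : l ∈ B) (hij : i ≠ j) (hkl : k ≠ l)
    (h : AIJ G B i j ⊆ AIJ G B k l) : i = k ∧ j = l := by
  by_contra hne
  obtain ⟨X, hX, h1, h2⟩ := AIJ_not_subset hGG hB hi hj hk hl hij hkl hne
  exact h2 ((h hX).2 h1)

lemma AIJ_ne (hGG : GoodG G μ ν) {B : Set V} (hB : IsBasisSet K V B) {i j : V}
    (hi : i ∈ B) (hj : j ∈ B) (hij : i ≠ j) : AIJ G B i j ≠ apartmentOf K V G B := by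
  intro hc
  obtain ⟨X, hX, h1, h2⟩ := exists_sep hGG hB hi hj hij
  rw [← hc] at hX
  exact h2 (hX.2 h1)

lemma basis_mod {B : Set V} (hB : IsBasisSet K V B) {i j : V}
    (hi : i ∈ B) (hj : j ∈ B) (hij : i ≠ j) :
    IsBasisSet K V (insert (i + j) (B \ {i})) := by
  have hjB : j ∈ B \ ({i} : Set V) := ⟨hj, fun hc => hij (Set.mem_singleton_iff.1 hc).symm⟩
  have hdiffli : LinearIndependent K ((↑) : (B \ {i} : Set V) → V) := (show LinearIndepOn K id B from hB.1).mono diff_subset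
  have hnot : (i + j) ∉ span K (B \ ({i} : Set V)) := by
    intro hc
    have hjmem : j ∈ span K (B \ ({i} : Set V)) := Submodule.subset_span hjB
    have himem : i ∈ span K (B \ ({i} : Set V)) := by
      have := Submodule.sub_mem _ hc hjmem
      simpa using this
    have := (mem_span_mem_basis hB diff_subset hi).1 himem
    exact this.2 rfl
  constructor
  · exact (show LinearIndepOn K id (B \ {i}) from hdiffli).insert (by rwa [Set.image_id])
  · apply le_antisymm le_top
    rw [← hB.2, Submodule.span_le]
    intro v hv
    by_cases hvi : v = i
    · subst hvi
      have h1 : (v + j) ∈ span K (insert (v + j) (B \ ({v} : Set V))) :=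
        Submodule.subset_span (mem_insert _ _)
      have h2 : j ∈ span K (insert (v + j) (B \ ({v} : Set V))) :=
        Submodule.subset_span (Or.inr hjB)
      have := Submodule.sub_mem _ h1 h2
      simpa using this
    · exact Submodule.subset_span (Or.inr ⟨hv, hvi⟩)

lemma AIJ_eq_inter (hGG : GoodG G μ ν) {B : Set V} (hB : IsBasisSet K V B) {i j : V}
    (hi : i ∈ B) (hj : j ∈ B) (hij : i ≠ j) :
    AIJ G B i j = apartmentOf K V G B ∩ apartmentOf K V G (insert (i + j) (B \ {i})) := by
  ext X
  constructor
  · rintro ⟨hXA, himp⟩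
    refine ⟨hXA, hXA.1, ?_⟩
    obtain ⟨-, S, hSB, rfl⟩ := hXA
    by_cases hiS : i ∈ S
    · have hiX : i ∈ span K S := Submodule.subset_span hiS
      have hjS : j ∈ S := (mem_span_mem_basis hB hSB hj).1 (himp hiX)
      refine ⟨insert (i + j) (S \ {i}), ?_, ?_⟩
      · apply Set.insert_subset_iff.2
        exact ⟨mem_insert _ _, (Set.diff_subset_diff_left hSB).trans (subset_insert _ _)⟩
      · apply le_antisymm
        · rw [Submodule.span_le]
          intro v hv
          by_cases hvi : v = i
          · subst hvi
            have h1 : (v + j) ∈ span K (insert (v + j) (S \ ({v} : Set V))) :=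
              Submodule.subset_span (mem_insert _ _)
            have h2 : j ∈ span K (insert (v + j) (S \ ({v} : Set V))) :=
              Submodule.subset_span (Or.inr ⟨hjS, fun hc => hij (Set.mem_singleton_iff.1 hc).symm⟩)
            have := Submodule.sub_mem _ h1 h2
            simpa using this
          · exact Submodule.subset_span (Or.inr ⟨hv, hvi⟩)
        · rw [Submodule.span_le]
          intro v hv
          rcases hv with rfl | hv
          · exact Submodule.add_mem _ hiX (himp hiX)
          · exact Submodule.subset_span hv.1
    · refine ⟨S, ?_, rfl⟩
      exact (fun v hv => Or.inr ⟨hSB hv, fun hc => hiS (hc ▸ hv)⟩)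
  · rintro ⟨hXA, hXA2⟩
    refine ⟨hXA, ?_⟩
    intro hiX
    by_contra hjX
    obtain ⟨-, S, hSB, hXS⟩ := hXA
    obtain ⟨-, U, hUB2, hXU⟩ := hXA2
    by_cases hU : (i + j) ∈ U
    · have : j ∈ X := by
        have h1 : (i + j) ∈ X := hXU ▸ Submodule.subset_span hU
        have := Submodule.sub_mem _ h1 hiX
        simpa using this
      exact hjX this
    · have hUB : U ⊆ B \ ({i} : Set V) := by
        intro v hv
        rcases hUB2 hv with rfl | hv2
        · exact absurd hv hU
        · exact hv2
      have hspan : span K U = span K S := by rw [← hXU]; exact hXS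
      have hUS : U = S := span_inj hB (hUB.trans diff_subset) hSB hspan
      have hiS : i ∈ S := (mem_span_mem_basis hB hSB hi).1 (hXS ▸ hiX)
      rw [← hUS] at hiS
      exact (hUB hiS).2 rfl

lemma eq_singleton_of_card_one {s : Set V} (h : #s = 1) : ∃ a, s = {a} := by
  rw [Cardinal.eq_one_iff_unique] at h
  obtain ⟨hsub, ⟨a⟩⟩ := h
  refine ⟨↑a, ?_⟩
  ext b
  constructor
  · intro hb
    have : (⟨b, hb⟩ : s) = a := Subsingleton.elim _ _
    exact congrArg Subtype.val this
  · rintro rfl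
    exact a.2

lemma rank_span_singleton_basis {B : Set V} (hB : IsBasisSet K V B) {k : V} (hk : k ∈ B) :
    Module.rank K ↥(span K ({k} : Set V)) = 1 := by
  have hk0 : k ≠ 0 := by
    have := hB.1.ne_zero ⟨k, hk⟩
    simpa using this
  rw [rank_span_set (by
    exact (linearIndepOn_singleton_iff K).2 hk0)]
  exact Cardinal.mk_singleton k

/-- The key exactness lemma: a subset of two apartments that separates all pairs of `B`
forces the apartments to coincide. -/
lemma apartment_eq_of_gen (hGG : GoodG G μ ν) {B C : Set V} (hB : IsBasisSet K V B)
    (hC : IsBasisSet K V C) {R : Set (Submodule K V)}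
    (hRB : R ⊆ apartmentOf K V G B) (hRC : R ⊆ apartmentOf K V G C)
    (hgen : ∀ i ∈ B, ∀ j ∈ B, i ≠ j → ∃ X ∈ R, i ∈ X ∧ j ∉ X) :
    apartmentOf K V G C = apartmentOf K V G B := by
  have hBtwo : 2 ≤ #B := by
    rw [card_bas hB]
    refine le_trans ?_ hGG.2.2.2.2
    have h2 : ((2:ℕ) : Cardinal.{v}) < ℵ₀ := Cardinal.nat_lt_aleph0 2
    simpa using h2.le
  -- characterisation of the intersection of all X ∈ R containing k
  have claimA : ∀ k ∈ B, ∀ x : V, (∀ X ∈ R, k ∈ X → x ∈ X) ↔ x ∈ span K ({k} : Set V) := by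
    intro k hk x
    constructor
    · intro hx
      rw [mem_span_sub hB (singleton_subset_iff.2 hk)]
      intro i hrep
      by_contra hik
      have hik' : (i : V) ≠ k := fun hc => hik (by rw [hc]; rfl)
      obtain ⟨X, hXR, hkX, hiX⟩ := hgen k hk ↑i i.2 (Ne.symm hik')
      have hxX := hx X hXR hkX
      have hXtr := span_tr hB (hRB hXR)
      rw [hXtr, mem_span_sub hB (tr_subset B X)] at hxX
      exact hiX ((hxX i hrep).2)
    · intro hx X hXR hkX
      obtain ⟨c, rfl⟩ := Submodule.mem_span_singleton.1 hx
      exact Submodule.smul_mem _ _ hkX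
  -- the "partner" of each k ∈ B inside C
  have hφ : ∀ k : V, k ∈ B → ∃ w, w ∈ C ∧ span K ({w} : Set V) = span K ({k} : Set V) := by
    intro k hk
    set Wk : Set V := {v ∈ C | ∀ X ∈ R, k ∈ X → v ∈ X} with hWk
    have hWkC : Wk ⊆ C := fun v hv => hv.1
    have hWspan : span K Wk = span K ({k} : Set V) := by
      apply le_antisymm
      · rw [Submodule.span_le]
        intro w hw
        exact (claimA k hk w).1 hw.2
      · rw [Submodule.span_le, singleton_subset_iff]
        rw [SetLike.mem_coe, mem_span_sub hC hWkC]
        intro i hrep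
        refine ⟨i.2, ?_⟩
        intro X hXR hkX
        have hXtr := span_tr hC (hRC hXR)
        rw [hXtr] at hkX
        rw [mem_span_sub hC (tr_subset C X)] at hkX
        have := (hkX i hrep).2
        rw [hXtr]
        exact Submodule.subset_span (hkX i hrep)
    have hcard : #Wk = 1 := by
      have h1 := rank_span_sub hC hWkC
      rw [hWspan, rank_span_singleton_basis hB hk] at h1
      exact h1.symm
    obtain ⟨w, hw⟩ := eq_singleton_of_card_one hcard
    refine ⟨w, hWkC (by rw [hw]; rfl), ?_⟩
    rw [← hw, hWspan]
  choose φ hφC hφspan using hφ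
  -- every element of C is a partner
  have hsurj : ∀ z ∈ C, ∃ k, ∃ hk : k ∈ B, φ k hk = z := by
    intro z hz
    by_contra hc
    push_neg at hc
    have himg : {v : V | ∃ k, ∃ hk : k ∈ B, φ k hk = v} ⊆ C \ {z} := by
      rintro v ⟨k, hk, rfl⟩
      exact ⟨hφC k hk, fun hv => hc k hk (Set.mem_singleton_iff.1 hv)⟩
    have htop : span K {v : V | ∃ k, ∃ hk : k ∈ B, φ k hk = v} = ⊤ := by
      apply le_antisymm le_top
      rw [← hB.2, Submodule.span_le]
      intro k hk
      have h1 : k ∈ span K ({φ k hk} : Set V) := by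
        rw [hφspan k hk]
        exact Submodule.subset_span rfl
      exact Submodule.span_mono (singleton_subset_iff.2
        (show φ k hk ∈ {v : V | ∃ k', ∃ hk' : k' ∈ B, φ k' hk' = v} from ⟨k, hk, rfl⟩)) h1
    have hzmem : z ∈ span K (C \ ({z} : Set V)) :=
      Submodule.span_mono himg (htop ▸ Submodule.mem_top)
    have := (mem_span_mem_basis hC diff_subset hz).1 hzmem
    exact this.2 rfl
  -- apartments coincide
  ext X
  constructor
  · rintro ⟨hXG, U, hUC, rfl⟩
    refine ⟨hXG, {v : V | ∃ hv : v ∈ B, φ v hv ∈ U}, by rintro v ⟨hv, -⟩; exact hv, ?_⟩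
    apply le_antisymm
    · rw [Submodule.span_le]
      intro u hu
      obtain ⟨k, hk, rfl⟩ := hsurj u (hUC hu)
      have h1 : φ k hk ∈ span K ({k} : Set V) := by
        rw [← hφspan k hk]; exact Submodule.subset_span rfl
      exact Submodule.span_mono (singleton_subset_iff.2
        (show k ∈ {v : V | ∃ hv : v ∈ B, φ v hv ∈ U} from ⟨hk, hu⟩)) h1
    · rw [Submodule.span_le]
      rintro v ⟨hv, hvU⟩
      have h1 : v ∈ span K ({φ v hv} : Set V) := by
        rw [hφspan v hv]; exact Submodule.subset_span rfl
      exact Submodule.span_mono (singleton_subset_iff.2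
        (show φ v hv ∈ U from hvU)) h1
  · rintro ⟨hXG, S, hSB, rfl⟩
    refine ⟨hXG, {w : V | ∃ k, ∃ hk : k ∈ B, k ∈ S ∧ φ k hk = w}, ?_, ?_⟩
    · rintro w ⟨k, hk, -, rfl⟩
      exact hφC k hk
    · apply le_antisymm
      · rw [Submodule.span_le]
        intro k hkS
        have hk : k ∈ B := hSB hkS
        have h1 : k ∈ span K ({φ k hk} : Set V) := by
          rw [hφspan k hk]; exact Submodule.subset_span rfl
        exact Submodule.span_mono (singleton_subset_iff.2
          (show φ k hk ∈ {w : V | ∃ k', ∃ hk' : k' ∈ B, k' ∈ S ∧ φ k' hk' = w} from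
            ⟨k, hk, hkS, rfl⟩)) h1
      · rw [Submodule.span_le]
        rintro w ⟨k, hk, hkS, rfl⟩
        have h1 : φ k hk ∈ span K ({k} : Set V) := by
          rw [← hφspan k hk]; exact Submodule.subset_span rfl
        exact Submodule.span_mono (singleton_subset_iff.2 hkS) h1

/-! ### Maximal inexact subsets -/

def IsApart (G : Set (Submodule K V)) (Ap : Set (Submodule K V)) : Prop :=
  ∃ B, IsBasisSet K V B ∧ Ap = apartmentOf K V G B

def Pans (G : Set (Submodule K V)) (A : Set (Submodule K V)) : Set (Set (Submodule K V)) :=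
  {M | (∃ Ap, IsApart G Ap ∧ M = A ∩ Ap) ∧ M ≠ A}

def MIS (G : Set (Submodule K V)) (A : Set (Submodule K V)) : Set (Set (Submodule K V)) :=
  {M ∈ Pans G A | ∀ N ∈ Pans G A, M ⊆ N → N = M}

lemma Pans_subset_AIJ (hGG : GoodG G μ ν) {B : Set V} (hB : IsBasisSet K V B)
    {M : Set (Submodule K V)} (hM : M ∈ Pans G (apartmentOf K V G B)) :
    ∃ k ∈ B, ∃ l ∈ B, k ≠ l ∧ M ⊆ AIJ G B k l := by
  obtain ⟨⟨Ap, ⟨C, hC, rfl⟩, rfl⟩, hne⟩ := hM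
  by_contra hcon
  push_neg at hcon
  have hgen : ∀ i ∈ B, ∀ j ∈ B, i ≠ j →
      ∃ X ∈ apartmentOf K V G B ∩ apartmentOf K V G C, i ∈ X ∧ j ∉ X := by
    intro i hi j hj hij
    have hns := hcon i hi j hj hij
    rw [Set.not_subset] at hns
    obtain ⟨X, hX, hXn⟩ := hns
    refine ⟨X, hX, ?_⟩
    by_contra hcc
    push_neg at hcc
    exact hXn ⟨hX.1, fun hiX => by_contra fun hjX => (by
      by_cases hiX' : i ∈ X
      · exact hjX (by by_contra hjX'; exact hjX (False.elim (hjX (by exact absurd (hcc hiX') hjX))))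
      · exact hiX' hiX)⟩
  have := apartment_eq_of_gen hGG hB hC inter_subset_left inter_subset_right hgen
  rw [this, Set.inter_self] at hne
  exact hne rfl

lemma AIJ_mem_Pans (hGG : GoodG G μ ν) {B : Set V} (hB : IsBasisSet K V B) {i j : V}
    (hi : i ∈ B) (hj : j ∈ B) (hij : i ≠ j) :
    AIJ G B i j ∈ Pans G (apartmentOf K V G B) := by
  refine ⟨⟨apartmentOf K V G (insert (i + j) (B \ {i})),
    ⟨_, basis_mod hB hi hj hij, rfl⟩, AIJ_eq_inter hGG hB hi hj hij⟩, AIJ_ne hGG hB hi hj hij⟩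

lemma MIS_iff (hGG : GoodG G μ ν) {B : Set V} (hB : IsBasisSet K V B)
    {M : Set (Submodule K V)} :
    M ∈ MIS G (apartmentOf K V G B) ↔ ∃ i ∈ B, ∃ j ∈ B, i ≠ j ∧ M = AIJ G B i j := by
  constructor
  · rintro ⟨hMp, hmax⟩
    obtain ⟨k, hk, l, hl, hkl, hsub⟩ := Pans_subset_AIJ hGG hB hMp
    exact ⟨k, hk, l, hl, hkl, (hmax _ (AIJ_mem_Pans hGG hB hk hl hkl) hsub).symm⟩
  · rintro ⟨i, hi, j, hj, hij, rfl⟩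
    refine ⟨AIJ_mem_Pans hGG hB hi hj hij, ?_⟩
    intro N hN hsub
    obtain ⟨k, hk, l, hl, hkl, hNsub⟩ := Pans_subset_AIJ hGG hB hN
    obtain ⟨rfl, rfl⟩ := AIJ_subset_iff hGG hB hi hj hk hl hij hkl (hsub.trans hNsub)
    exact le_antisymm hNsub hsub

/-! ### Combinatorics of maximal inexact subsets -/

def HH (A M N : Set (Submodule K V)) : Prop := ∀ X ∈ A, X ∈ M ∨ X ∈ N

def NBset (G A M : Set (Submodule K V)) : Set (Set (Submodule K V)) :=
  {R ∈ MIS G A | HH A R M}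

def EEp (G A M N : Set (Submodule K V)) : Prop :=
  M = N ∨ (NBset G A M ∩ NBset G A N).Infinite

def RRev (G A M N : Set (Submodule K V)) : Prop :=
  HH A M N ∧ NBset G A M ∩ NBset G A N = ∅

def AdjPred (G A : Set (Submodule K V)) (X Y : Submodule K V) : Prop :=
  ∃ M N, M ∈ MIS G A ∧ N ∈ MIS G A ∧ RRev G A M N ∧
    X ∉ M ∧ Y ∈ M ∧ Y ∉ N ∧ X ∈ N ∧
    ∀ M' ∈ MIS G A, X ∉ M' → Y ∈ M' → EEp G A M' M

lemma not_mem_AIJ_iff {B : Set V} {i j : V} {X : Submodule K V}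
    (hX : X ∈ apartmentOf K V G B) : X ∉ AIJ G B i j ↔ (i ∈ X ∧ j ∉ X) := by
  unfold AIJ
  simp only [Set.mem_setOf_eq, hX, true_and, Classical.not_imp]

lemma AIJ_inj (hGG : GoodG G μ ν) {B : Set V} (hB : IsBasisSet K V B) {i j k l : V}
    (hi : i ∈ B) (hj : j ∈ B) (hk : k ∈ B) (hl : l ∈ B) (hij : i ≠ j) (hkl : k ≠ l)
    (h : AIJ G B i j = AIJ G B k l) : i = k ∧ j = l :=
  AIJ_subset_iff hGG hB hi hj hk hl hij hkl (le_of_eq h)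

lemma HH_AIJ_iff (hGG : GoodG G μ ν) {B : Set V} (hB : IsBasisSet K V B) {i j k l : V}
    (hi : i ∈ B) (hj : j ∈ B) (hk : k ∈ B) (hl : l ∈ B) (hij : i ≠ j) (hkl : k ≠ l) :
    HH (apartmentOf K V G B) (AIJ G B i j) (AIJ G B k l) ↔ (i = l ∨ j = k) := by
  constructor
  · intro h
    by_contra hc
    push_neg at hc
    obtain ⟨hil, hjk⟩ := hc
    obtain ⟨X, hX, h1, h2⟩ := exists_mem_apartment hGG hB (F1 := {i, k}) (F2 := {j, l})
      (by rw [Set.insert_subset_iff]; exact ⟨hi, singleton_subset_iff.2 hk⟩)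
      (by rw [Set.insert_subset_iff]; exact ⟨hj, singleton_subset_iff.2 hl⟩)
      (by rw [Set.disjoint_left]
          rintro z hz hz2
          simp only [Set.mem_insert_iff, Set.mem_singleton_iff] at hz hz2
          rcases hz with rfl | rfl <;> rcases hz2 with rfl | rfl
          · exact hij rfl
          · exact hil rfl
          · exact hjk rfl
          · exact hkl rfl)
      (card_pair_lt i k) (card_pair_lt j l)
      (le_trans (card_pair_le i k) hGG.2.1)
      (le_trans (card_pair_le j l) hGG.2.2.1)
    rcases h X hX with hm | hm
    · exact h2 j (Or.inl rfl) (hm.2 (h1 i (Or.inl rfl)))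
    · exact h2 l (Or.inr rfl) (hm.2 (h1 k (Or.inr rfl)))
  · intro h X hX
    by_cases hiX : i ∈ X
    · by_cases hjX : j ∈ X
      · exact Or.inl ⟨hX, fun _ => hjX⟩
      · refine Or.inr ⟨hX, fun hkX => ?_⟩
        rcases h with rfl | rfl
        · exact hiX
        · exact absurd hkX hjX
    · exact Or.inl ⟨hX, fun h' => absurd h' hiX⟩

lemma mem_NB_AIJ (hGG : GoodG G μ ν) {B : Set V} (hB : IsBasisSet K V B) {s t a b : V}
    (hs : s ∈ B) (ht : t ∈ B) (ha : a ∈ B) (hb : b ∈ B) (hst : s ≠ t) (hab : a ≠ b)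
    (h : s = b ∨ t = a) :
    AIJ G B s t ∈ NBset G (apartmentOf K V G B) (AIJ G B a b) :=
  ⟨(MIS_iff hGG hB).2 ⟨s, hs, t, ht, hst, rfl⟩,
    (HH_AIJ_iff hGG hB hs ht ha hb hst hab).2 h⟩

lemma B_infinite (hGG : GoodG G μ ν) {B : Set V} (hB : IsBasisSet K V B) : B.Infinite := by
  rw [← Set.infinite_coe_iff, ← Cardinal.aleph0_le_mk_iff]
  rw [card_bas hB]
  exact hGG.2.2.2.2

lemma NB_inter_infinite_FF (hGG : GoodG G μ ν) {B : Set V} (hB : IsBasisSet K V B)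
    {a b l : V} (ha : a ∈ B) (hb : b ∈ B) (hl : l ∈ B) (hab : a ≠ b) (hal : a ≠ l) :
    (NBset G (apartmentOf K V G B) (AIJ G B a b) ∩
      NBset G (apartmentOf K V G B) (AIJ G B a l)).Infinite := by
  have hinf : (B \ ({a} : Set V)).Infinite := (B_infinite hGG hB).diff (finite_singleton a)
  have hinj : Set.InjOn (fun t => AIJ G B t a) (B \ ({a} : Set V)) := by
    intro t₁ h₁ t₂ h₂ heq
    exact (AIJ_inj hGG hB h₁.1 ha h₂.1 ha (fun hc => h₁.2 (by simp [hc]))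
      (fun hc => h₂.2 (by simp [hc])) heq).1
  refine Set.Infinite.mono ?_ (hinf.image hinj)
  rintro R ⟨t, ht, rfl⟩
  have htne : t ≠ a := fun hc => ht.2 (by simp [hc])
  exact ⟨mem_NB_AIJ hGG hB ht.1 ha ha hb htne hab (Or.inr rfl),
    mem_NB_AIJ hGG hB ht.1 ha ha hl htne hal (Or.inr rfl)⟩

lemma NB_inter_infinite_SS (hGG : GoodG G μ ν) {B : Set V} (hB : IsBasisSet K V B)
    {a b c : V} (ha : a ∈ B) (hb : b ∈ B) (hc : c ∈ B) (hab : a ≠ b) (hcb : c ≠ b) :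
    (NBset G (apartmentOf K V G B) (AIJ G B a b) ∩
      NBset G (apartmentOf K V G B) (AIJ G B c b)).Infinite := by
  have hinf : (B \ ({b} : Set V)).Infinite := (B_infinite hGG hB).diff (finite_singleton b)
  have hinj : Set.InjOn (fun t => AIJ G B b t) (B \ ({b} : Set V)) := by
    intro t₁ h₁ t₂ h₂ heq
    exact (AIJ_inj hGG hB hb h₁.1 hb h₂.1 (fun hcc => h₁.2 (by simp [← hcc]))
      (fun hcc => h₂.2 (by simp [← hcc])) heq).2
  refine Set.Infinite.mono ?_ (hinf.image hinj)
  rintro R ⟨t, ht, rfl⟩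
  have htne : b ≠ t := fun hcc => ht.2 (by simp [← hcc])
  exact ⟨mem_NB_AIJ hGG hB hb ht.1 ha hb htne hab (Or.inl rfl),
    mem_NB_AIJ hGG hB hb ht.1 hc hb htne hcb (Or.inl rfl)⟩

lemma NB_inter_finite_GEN (hGG : GoodG G μ ν) {B : Set V} (hB : IsBasisSet K V B)
    {a b c d : V} (ha : a ∈ B) (hb : b ∈ B) (hc : c ∈ B) (hd : d ∈ B)
    (hab : a ≠ b) (hcd : c ≠ d) (hac : a ≠ c) (hbd : b ≠ d) :
    (NBset G (apartmentOf K V G B) (AIJ G B a b) ∩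
      NBset G (apartmentOf K V G B) (AIJ G B c d)).Finite := by
  apply Set.Finite.subset ((Set.finite_singleton (AIJ G B d a)).insert (AIJ G B b c))
  rintro R ⟨⟨hRmis, hR1⟩, ⟨-, hR2⟩⟩
  obtain ⟨s, hs, t, ht, hst, rfl⟩ := (MIS_iff hGG hB).1 hRmis
  rw [HH_AIJ_iff hGG hB hs ht ha hb hst hab] at hR1
  rw [HH_AIJ_iff hGG hB hs ht hc hd hst hcd] at hR2
  rcases hR1 with rfl | rfl
  · rcases hR2 with h | rfl
    · exact absurd h hbd
    · exact Set.mem_insert _ _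
  · rcases hR2 with rfl | h
    · exact Set.mem_insert_iff.2 (Or.inr rfl)
    · exact absurd h hac

lemma RRev_AIJ (hGG : GoodG G μ ν) {B : Set V} (hB : IsBasisSet K V B) {a b : V}
    (ha : a ∈ B) (hb : b ∈ B) (hab : a ≠ b) :
    RRev G (apartmentOf K V G B) (AIJ G B a b) (AIJ G B b a) := by
  constructor
  · exact (HH_AIJ_iff hGG hB ha hb hb ha hab hab.symm).2 (Or.inl rfl)
  · rw [Set.eq_empty_iff_forall_notMem]
    rintro R ⟨⟨hRmis, hR1⟩, ⟨-, hR2⟩⟩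
    obtain ⟨s, hs, t, ht, hst, rfl⟩ := (MIS_iff hGG hB).1 hRmis
    rw [HH_AIJ_iff hGG hB hs ht ha hb hst hab] at hR1
    rw [HH_AIJ_iff hGG hB hs ht hb ha hst hab.symm] at hR2
    rcases hR1 with rfl | rfl
    · rcases hR2 with h | h
      · exact hab h.symm
      · exact hst h.symm
    · rcases hR2 with h | h
      · exact hst h
      · exact hab h

lemma RRev_unique (hGG : GoodG G μ ν) {B : Set V} (hB : IsBasisSet K V B) {a b : V}
    (ha : a ∈ B) (hb : b ∈ B) (hab : a ≠ b) {N : Set (Submodule K V)}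
    (hN : N ∈ MIS G (apartmentOf K V G B))
    (h : RRev G (apartmentOf K V G B) (AIJ G B a b) N) : N = AIJ G B b a := by
  obtain ⟨s, hs, t, ht, hst, rfl⟩ := (MIS_iff hGG hB).1 hN
  have h1 := (HH_AIJ_iff hGG hB ha hb hs ht hab hst).1 h.1
  -- h1 : a = t ∨ b = s
  have hempty := h.2
  rw [Set.eq_empty_iff_forall_notMem] at hempty
  have hsb : s = b := by
    by_contra hsb
    have hta : a = t := by
      rcases h1 with h1 | h1
      · exact h1
      · exact absurd h1.symm hsb
    subst hta
    -- witness AIJ b s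
    refine hempty (AIJ G B b s) ⟨?_, ?_⟩
    · exact mem_NB_AIJ hGG hB hb hs ha hb (fun hcc => hsb hcc.symm) hab (Or.inl rfl)
    · exact mem_NB_AIJ hGG hB hb hs hs ha (fun hcc => hsb hcc.symm) hst (Or.inr rfl)
  subst hsb
  have hta : t = a := by
    by_contra hta
    -- witness AIJ t a
    refine hempty (AIJ G B t a) ⟨?_, ?_⟩
    · exact mem_NB_AIJ hGG hB ht ha ha hb hta hab (Or.inr rfl)
    · exact mem_NB_AIJ hGG hB ht ha hb ht hta hst (Or.inl rfl)
  subst hta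
  rfl

lemma tr_cards (hGG : GoodG G μ ν) {B : Set V} (hB : IsBasisSet K V B) {X : Submodule K V}
    (hX : X ∈ apartmentOf K V G B) : #(tr B X) = μ ∧ #(B \ tr B X : Set V) = ν := by
  obtain ⟨S, hSB, rfl, h1, h2⟩ := (mem_apartment_iff hGG hB).1 hX
  rw [tr_span hB hSB]
  exact ⟨h1, h2⟩

theorem adjPred_iff (hGG : GoodG G μ ν) {B : Set V} (hB : IsBasisSet K V B)
    {X Y : Submodule K V} (hX : X ∈ apartmentOf K V G B) (hY : Y ∈ apartmentOf K V G B) :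
    AdjPred G (apartmentOf K V G B) X Y ↔
      (∃ a, tr B X \ tr B Y = {a}) ∧ (∃ b, tr B Y \ tr B X = {b}) := by
  set S := tr B X with hS
  set T := tr B Y with hT
  have hmemX : ∀ v ∈ B, (v ∈ X ↔ v ∈ S) := fun v hv => ⟨fun h => ⟨hv, h⟩, fun h => h.2⟩
  have hmemY : ∀ v ∈ B, (v ∈ Y ↔ v ∈ T) := fun v hv => ⟨fun h => ⟨hv, h⟩, fun h => h.2⟩
  constructor
  · rintro ⟨M, N, hM, hN, hrev, hXM, hYM, hYN, hXN, hall⟩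
    obtain ⟨a, ha, b, hb, hab, rfl⟩ := (MIS_iff hGG hB).1 hM
    have hNrev : N = AIJ G B b a := RRev_unique hGG hB ha hb hab hN hrev
    subst hNrev
    obtain ⟨haX, hbX⟩ := (not_mem_AIJ_iff hX).1 hXM
    obtain ⟨hbY, haY⟩ := (not_mem_AIJ_iff hY).1 hYN
    have haST : a ∈ S \ T := ⟨⟨ha, haX⟩, fun hc => haY hc.2⟩
    have hbTS : b ∈ T \ S := ⟨⟨hb, hbY⟩, fun hc => hbX hc.2⟩
    have h1 : S \ T = {a} := by
      refine Set.Subset.antisymm ?_ (singleton_subset_iff.2 haST)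
      rintro a' ⟨ha'S, ha'T⟩
      rw [Set.mem_singleton_iff]
      by_contra ha'a
      have ha'B : a' ∈ B := ha'S.1
      have ha'X : a' ∈ X := ha'S.2
      have ha'Y : a' ∉ Y := fun hc => ha'T ⟨ha'B, hc⟩
      obtain ⟨t, htBS, htb⟩ := exists_ne_of_two_le
        (show (2:Cardinal) ≤ #(B \ S : Set V) by
          rw [(tr_cards hGG hB hX).2]; exact hGG.2.2.1) b
      have htB : t ∈ B := htBS.1
      have htX : t ∉ X := fun hc => htBS.2 ⟨htB, hc⟩
      have ha't : a' ≠ t := fun hc => htBS.2 (hc ▸ ha'S)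
      have hM'mis : AIJ G B a' t ∈ MIS G (apartmentOf K V G B) :=
        (MIS_iff hGG hB).2 ⟨a', ha'B, t, htB, ha't, rfl⟩
      have hXM' : X ∉ AIJ G B a' t := (not_mem_AIJ_iff hX).2 ⟨ha'X, htX⟩
      have hYM' : Y ∈ AIJ G B a' t := ⟨hY, fun hc => absurd hc ha'Y⟩
      rcases hall _ hM'mis hXM' hYM' with heq | hinf
      · exact ha'a (AIJ_inj hGG hB ha'B htB ha hb ha't hab heq).1
      · exact (NB_inter_finite_GEN hGG hB ha'B htB ha hb ha't hab ha'a htb).not_infinite hinf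
    refine ⟨⟨a, h1⟩, ⟨b, Set.Subset.antisymm ?_ (singleton_subset_iff.2 hbTS)⟩⟩
    · rintro b' ⟨hb'T, hb'S⟩
      rw [Set.mem_singleton_iff]
      by_contra hb'b
      have hb'B : b' ∈ B := hb'T.1
      have hb'Y : b' ∈ Y := hb'T.2
      have hb'X : b' ∉ X := fun hc => hb'S ⟨hb'B, hc⟩
      obtain ⟨s, hsS, hsa⟩ := exists_ne_of_two_le
        (show (2:Cardinal) ≤ #S by rw [(tr_cards hGG hB hX).1]; exact hGG.2.1) a
      have hsB : s ∈ B := hsS.1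
      have hsX : s ∈ X := hsS.2
      have hsT : s ∈ T := by
        by_contra hsT
        have hmem : s ∈ S \ T := ⟨hsS, hsT⟩
        rw [h1] at hmem
        exact hsa hmem
      have hsY : s ∈ Y := hsT.2
      have hsb' : s ≠ b' := fun hc => hb'S (hc ▸ hsS)
      have hM'mis : AIJ G B s b' ∈ MIS G (apartmentOf K V G B) :=
        (MIS_iff hGG hB).2 ⟨s, hsB, b', hb'B, hsb', rfl⟩
      have hXM' : X ∉ AIJ G B s b' := (not_mem_AIJ_iff hX).2 ⟨hsX, hb'X⟩
      have hYM' : Y ∈ AIJ G B s b' := ⟨hY, fun _ => hb'Y⟩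
      rcases hall _ hM'mis hXM' hYM' with heq | hinf
      · exact hsa (AIJ_inj hGG hB hsB hb'B ha hb hsb' hab heq).1
      · exact (NB_inter_finite_GEN hGG hB hsB hb'B ha hb hsb' hab hsa hb'b).not_infinite hinf
  · rintro ⟨⟨a, hSTa⟩, ⟨b, hTSb⟩⟩
    have haST : a ∈ S \ T := hSTa ▸ rfl
    have hbTS : b ∈ T \ S := hTSb ▸ rfl
    have haB : a ∈ B := haST.1.1
    have hbB : b ∈ B := hbTS.1.1
    have haX : a ∈ X := haST.1.2
    have hbY : b ∈ Y := hbTS.1.2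
    have haY : a ∉ Y := fun hc => haST.2 ⟨haB, hc⟩
    have hbX : b ∉ X := fun hc => hbTS.2 ⟨hbB, hc⟩
    have hab : a ≠ b := fun hc => haY (hc ▸ hbY)
    refine ⟨AIJ G B a b, AIJ G B b a,
      (MIS_iff hGG hB).2 ⟨a, haB, b, hbB, hab, rfl⟩,
      (MIS_iff hGG hB).2 ⟨b, hbB, a, haB, hab.symm, rfl⟩,
      RRev_AIJ hGG hB haB hbB hab,
      (not_mem_AIJ_iff hX).2 ⟨haX, hbX⟩,
      ⟨hY, fun hc => absurd hc haY⟩,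
      (not_mem_AIJ_iff hY).2 ⟨hbY, haY⟩,
      ⟨hX, fun hc => absurd hc hbX⟩, ?_⟩
    intro M' hM' hXM' hYM'
    obtain ⟨s, hsB, t, htB, hst, rfl⟩ := (MIS_iff hGG hB).1 hM'
    obtain ⟨hsX, htX⟩ := (not_mem_AIJ_iff hX).1 hXM'
    have himp := hYM'.2
    by_cases hsY : s ∈ Y
    · have htY : t ∈ Y := himp hsY
      have htTS : t ∈ T \ S := ⟨⟨htB, htY⟩, fun hc => htX hc.2⟩
      have htb : t = b := by rw [hTSb] at htTS; exact htTS
      subst htb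
      by_cases hsa : s = a
      · subst hsa; exact Or.inl rfl
      · exact Or.inr (NB_inter_infinite_SS hGG hB hsB htB haB hst hab)
    · have hsST : s ∈ S \ T := ⟨⟨hsB, hsX⟩, fun hc => hsY hc.2⟩
      have hsa : s = a := by rw [hSTa] at hsST; exact hsST
      subst hsa
      by_cases htb : t = b
      · subst htb; exact Or.inl rfl
      · exact Or.inr (NB_inter_infinite_FF hGG hB hsB htB hbB hst hab)

/-! ### Transport through `f` -/

lemma invOn_bijOn {f g : Submodule K V → Submodule K V}
    (hbij : Set.BijOn f G G) (hinv : Set.InvOn g f G G) : Set.BijOn g G G := by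
  refine ⟨?_, ?_, ?_⟩
  · intro x hx
    obtain ⟨w, hw, rfl⟩ := hbij.surjOn hx
    rw [hinv.1 hw]; exact hw
  · intro x hx y hy hxy
    have hx' := hinv.2 hx
    have hy' := hinv.2 hy
    rw [← hx', ← hy', hxy]
  · intro x hx
    exact ⟨f x, hbij.mapsTo hx, hinv.1 hx⟩

lemma image_image_of_invOn {f g : Submodule K V → Submodule K V}
    (hinv : Set.InvOn g f G G) {D : Set (Submodule K V)} (hD : D ⊆ G) : g '' (f '' D) = D := by
  ext z
  constructor
  · rintro ⟨-, ⟨d, hd, rfl⟩, rfl⟩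
    rw [hinv.1 (hD hd)]; exact hd
  · intro hz
    exact ⟨f z, ⟨z, hz, rfl⟩, hinv.1 (hD hz)⟩

lemma mem_image_iff_of_inj {f : Submodule K V → Submodule K V} (hinj : Set.InjOn f G)
    {D : Set (Submodule K V)} (hD : D ⊆ G) {Z : Submodule K V} (hZ : Z ∈ G) :
    f Z ∈ f '' D ↔ Z ∈ D := by
  constructor
  · rintro ⟨W, hW, hWZ⟩
    rwa [← hinj (hD hW) hZ hWZ]
  · exact fun h => ⟨Z, h, rfl⟩

lemma Pans_subset {A M : Set (Submodule K V)} (hM : M ∈ Pans G A) : M ⊆ A := by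
  obtain ⟨⟨Ap, -, rfl⟩, -⟩ := hM
  exact inter_subset_left

lemma MIS_subset_G {B : Set V} {M : Set (Submodule K V)}
    (hM : M ∈ MIS G (apartmentOf K V G B)) : M ⊆ G :=
  (Pans_subset hM.1).trans (fun _ h => h.1)

lemma Pans_image {f g : Submodule K V → Submodule K V}
    (hbij : Set.BijOn f G G) (hinv : Set.InvOn g f G G)
    (hf : ∀ B : Set V, IsBasisSet K V B → ∃ B' : Set V, IsBasisSet K V B' ∧
      f '' apartmentOf K V G B = apartmentOf K V G B')
    {B B' : Set V} (hA' : f '' apartmentOf K V G B = apartmentOf K V G B')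
    {M : Set (Submodule K V)} (hM : M ∈ Pans G (apartmentOf K V G B)) :
    f '' M ∈ Pans G (apartmentOf K V G B') := by
  obtain ⟨⟨Ap, ⟨C, hC, rfl⟩, rfl⟩, hne⟩ := hM
  have hint : f '' (apartmentOf K V G B ∩ apartmentOf K V G C)
      = (f '' apartmentOf K V G B) ∩ (f '' apartmentOf K V G C) :=
    Set.InjOn.image_inter hbij.injOn (fun _ h => h.1) (fun _ h => h.1)
  obtain ⟨C', hC', hfC⟩ := hf C hC
  refine ⟨⟨apartmentOf K V G C', ⟨C', hC', rfl⟩, by rw [hint, hA', hfC]⟩, ?_⟩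
  intro hcon
  apply hne
  have hMG : apartmentOf K V G B ∩ apartmentOf K V G C ⊆ G := fun _ h => h.1.1
  have hAG : apartmentOf K V G B ⊆ G := fun _ h => h.1
  calc apartmentOf K V G B ∩ apartmentOf K V G C
      = g '' (f '' (apartmentOf K V G B ∩ apartmentOf K V G C)) :=
        (image_image_of_invOn hinv hMG).symm
    _ = g '' (apartmentOf K V G B') := by rw [hcon]
    _ = g '' (f '' (apartmentOf K V G B)) := by rw [hA']
    _ = apartmentOf K V G B := image_image_of_invOn hinv hAG

lemma MIS_image {f g : Submodule K V → Submodule K V}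
    (hbij : Set.BijOn f G G) (hinv : Set.InvOn g f G G)
    (hf : ∀ B : Set V, IsBasisSet K V B → ∃ B' : Set V, IsBasisSet K V B' ∧
      f '' apartmentOf K V G B = apartmentOf K V G B')
    (hg : ∀ B : Set V, IsBasisSet K V B → ∃ B' : Set V, IsBasisSet K V B' ∧
      g '' apartmentOf K V G B = apartmentOf K V G B')
    {B B' : Set V} (hA' : f '' apartmentOf K V G B = apartmentOf K V G B')
    {M : Set (Submodule K V)} (hM : M ∈ MIS G (apartmentOf K V G B)) :
    f '' M ∈ MIS G (apartmentOf K V G B') := by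
  obtain ⟨hMp, hmax⟩ := hM
  have hgbij := invOn_bijOn hbij hinv
  have hgA : g '' apartmentOf K V G B' = apartmentOf K V G B := by
    rw [← hA']; exact image_image_of_invOn hinv (fun _ h => h.1)
  refine ⟨Pans_image hbij hinv hf hA' hMp, ?_⟩
  intro N' hN' hsub
  have hMG : M ⊆ G := (Pans_subset hMp).trans (fun _ h => h.1)
  have hN'G : N' ⊆ G := (Pans_subset hN').trans (fun _ h => h.1)
  have hgN' : g '' N' ∈ Pans G (apartmentOf K V G B) :=
    Pans_image hgbij hinv.symm hg hgA hN'
  have hMsub : M ⊆ g '' N' := by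
    intro m hm
    have h1 : f m ∈ N' := hsub ⟨m, hm, rfl⟩
    exact ⟨f m, h1, hinv.1 (hMG hm)⟩
  have heq := hmax _ hgN' hMsub
  rw [← heq]
  exact (image_image_of_invOn hinv.symm hN'G).symm

lemma HH_image {f : Submodule K V → Submodule K V} {A A' M N : Set (Submodule K V)}
    (hA' : f '' A = A') (h : HH A M N) : HH A' (f '' M) (f '' N) := by
  intro X' hX'
  rw [← hA'] at hX'
  obtain ⟨Z, hZ, rfl⟩ := hX'
  rcases h Z hZ with hz | hz
  · exact Or.inl ⟨Z, hz, rfl⟩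
  · exact Or.inr ⟨Z, hz, rfl⟩

lemma adjPred_transport {f g : Submodule K V → Submodule K V}
    (hbij : Set.BijOn f G G) (hinv : Set.InvOn g f G G)
    (hf : ∀ B : Set V, IsBasisSet K V B → ∃ B' : Set V, IsBasisSet K V B' ∧
      f '' apartmentOf K V G B = apartmentOf K V G B')
    (hg : ∀ B : Set V, IsBasisSet K V B → ∃ B' : Set V, IsBasisSet K V B' ∧
      g '' apartmentOf K V G B = apartmentOf K V G B')
    {B B' : Set V}
    (hA' : f '' apartmentOf K V G B = apartmentOf K V G B')
    {X Y : Submodule K V} (hX : X ∈ apartmentOf K V G B) (hY : Y ∈ apartmentOf K V G B)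
    (h : AdjPred G (apartmentOf K V G B) X Y) :
    AdjPred G (apartmentOf K V G B') (f X) (f Y) := by
  have hAG : apartmentOf K V G B ⊆ G := fun _ h => h.1
  have hA'G : apartmentOf K V G B' ⊆ G := fun _ h => h.1
  have hgbij := invOn_bijOn hbij hinv
  have hgA : g '' apartmentOf K V G B' = apartmentOf K V G B := by
    rw [← hA']; exact image_image_of_invOn hinv hAG
  have hXG : X ∈ G := hAG hX
  have hYG : Y ∈ G := hAG hY
  obtain ⟨M, N, hM, hN, hrev, hXM, hYM, hYN, hXN, hall⟩ := h
  have hMG : M ⊆ G := MIS_subset_G hM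
  have hNG : N ⊆ G := MIS_subset_G hN
  -- pulling back MIS elements of B'
  have hpull : ∀ R' ∈ MIS G (apartmentOf K V G B'),
      g '' R' ∈ MIS G (apartmentOf K V G B) ∧ R' = f '' (g '' R') := by
    intro R' hR'
    refine ⟨MIS_image hgbij hinv.symm hg hf hgA hR', ?_⟩
    exact (image_image_of_invOn hinv.symm (MIS_subset_G hR')).symm
  -- NB transport
  have hNB : ∀ R M₀ : Set (Submodule K V), R ∈ NBset G (apartmentOf K V G B) M₀ →
      f '' R ∈ NBset G (apartmentOf K V G B') (f '' M₀) := by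
    rintro R M₀ ⟨hRm, hRh⟩
    exact ⟨MIS_image hbij hinv hf hg hA' hRm, HH_image hA' hRh⟩
  have hNBback : ∀ R' M₀ : Set (Submodule K V), M₀ ⊆ G →
      R' ∈ NBset G (apartmentOf K V G B') (f '' M₀) →
      g '' R' ∈ NBset G (apartmentOf K V G B) M₀ := by
    rintro R' M₀ hM₀G ⟨hR'm, hR'h⟩
    refine ⟨MIS_image hgbij hinv.symm hg hf hgA hR'm, ?_⟩
    intro Z hZ
    have hfZ : f Z ∈ apartmentOf K V G B' := by
      rw [← hA']; exact ⟨Z, hZ, rfl⟩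
    rcases hR'h (f Z) hfZ with hz | hz
    · exact Or.inl ⟨f Z, hz, hinv.1 (hAG hZ)⟩
    · exact Or.inr ((mem_image_iff_of_inj hbij.injOn hM₀G (hAG hZ)).1 hz)
  refine ⟨f '' M, f '' N, MIS_image hbij hinv hf hg hA' hM,
    MIS_image hbij hinv hf hg hA' hN, ?_, ?_, ?_, ?_, ?_, ?_⟩
  · constructor
    · exact HH_image hA' hrev.1
    · rw [Set.eq_empty_iff_forall_notMem]
      rintro R' ⟨hR'1, hR'2⟩
      have h1 := hNBback R' M hMG hR'1
      have h2 := hNBback R' N hNG hR'2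
      have hmem : g '' R' ∈ NBset G (apartmentOf K V G B) M ∩
          NBset G (apartmentOf K V G B) N := ⟨h1, h2⟩
      rw [hrev.2] at hmem
      exact hmem
  · intro hc
    exact hXM ((mem_image_iff_of_inj hbij.injOn hMG hXG).1 hc)
  · exact ⟨Y, hYM, rfl⟩
  · intro hc
    exact hYN ((mem_image_iff_of_inj hbij.injOn hNG hYG).1 hc)
  · exact ⟨X, hXN, rfl⟩
  · intro M'' hM'' hXM'' hYM''
    obtain ⟨hM₀, hM''eq⟩ := hpull M'' hM''
    have hM₀G : (g '' M'') ⊆ G := MIS_subset_G hM₀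
    have hXM₀ : X ∉ g '' M'' := fun hc => hXM'' (hM''eq ▸ (⟨X, hc, rfl⟩ : f X ∈ f '' (g '' M'')))
    have hYM₀ : Y ∈ g '' M'' := by
      have hfy : f Y ∈ f '' (g '' M'') := hM''eq ▸ hYM''
      exact (mem_image_iff_of_inj hbij.injOn hM₀G hYG).1 hfy
    rcases hall (g '' M'') hM₀ hXM₀ hYM₀ with heq | hinf
    · left; rw [hM''eq, heq]
    · right
      have hinj2 : Set.InjOn (Set.image f) (NBset G (apartmentOf K V G B) (g '' M'') ∩
          NBset G (apartmentOf K V G B) M) := by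
        intro R₁ h₁ R₂ h₂ he
        have hR₁G : R₁ ⊆ G := MIS_subset_G h₁.1.1
        have hR₂G : R₂ ⊆ G := MIS_subset_G h₂.1.1
        rw [← image_image_of_invOn hinv hR₁G, ← image_image_of_invOn hinv hR₂G]
        simp only [Set.image] at he ⊢
        rw [he]
      refine Set.Infinite.mono ?_ (hinf.image hinj2)
      rintro R'' ⟨R, ⟨hr1, hr2⟩, rfl⟩
      constructor
      · rw [hM''eq]
        exact hNB R (g '' M'') hr1
      · exact hNB R M hr2

/-! ### Main lemma -/

lemma key (hGG : GoodG G μ ν) {f g : Submodule K V → Submodule K V}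
    (hbij : Set.BijOn f G G) (hinv : Set.InvOn g f G G)
    (hf : ∀ B : Set V, IsBasisSet K V B → ∃ B' : Set V, IsBasisSet K V B' ∧
      f '' apartmentOf K V G B = apartmentOf K V G B')
    (hg : ∀ B : Set V, IsBasisSet K V B → ∃ B' : Set V, IsBasisSet K V B' ∧
      g '' apartmentOf K V G B = apartmentOf K V G B')
    {X Y : Submodule K V} (hXG : X ∈ G) (hYG : Y ∈ G)
    (hadj : AdjacentSub K V X Y) : AdjacentSub K V (f X) (f Y) := by
  obtain ⟨B, hB, S, T, x, y, hSB, hTB, hXS, hYT, hST, hTS⟩ := exists_adapted hadj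
  have hX : X ∈ apartmentOf K V G B := ⟨hXG, S, hSB, hXS⟩
  have hY : Y ∈ apartmentOf K V G B := ⟨hYG, T, hTB, hYT⟩
  have htrX : tr B X = S := by rw [hXS]; exact tr_span hB hSB
  have htrY : tr B Y = T := by rw [hYT]; exact tr_span hB hTB
  have hpred : AdjPred G (apartmentOf K V G B) X Y := by
    rw [adjPred_iff hGG hB hX hY, htrX, htrY]
    exact ⟨⟨x, hST⟩, ⟨y, hTS⟩⟩
  obtain ⟨B', hB', hA'⟩ := hf B hB
  have hpred' := adjPred_transport hbij hinv hf hg hA' hX hY hpred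
  have hfX : f X ∈ apartmentOf K V G B' := by rw [← hA']; exact ⟨X, hX, rfl⟩
  have hfY : f Y ∈ apartmentOf K V G B' := by rw [← hA']; exact ⟨Y, hY, rfl⟩
  rw [adjPred_iff hGG hB' hfX hfY] at hpred'
  obtain ⟨⟨a, ha⟩, ⟨b, hb⟩⟩ := hpred'
  have hfXs : f X = span K (tr B' (f X)) := span_tr hB' hfX
  have hfYs : f Y = span K (tr B' (f Y)) := span_tr hB' hfY
  rw [hfXs, hfYs]
  exact adjacent_of_pattern hB' (tr_subset _ _) (tr_subset _ _) ha hb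

end S9

variable {K : Type u} {V : Type v} [DivisionRing K] [AddCommGroup V] [Module K V]

/-- Lemma 3: a bijective transformation `f` of `G` such that `f` and `f⁻¹` send
apartments to apartments is an automorphism of the Grassmann graph `Γ(G)`. -/
theorem stmt9 (hα : Cardinal.aleph0 ≤ Module.rank K V)
    (β : Cardinal.{v}) (hβ1 : 1 < β) (hβ : β ≤ Module.rank K V)
    (G : Set (Submodule K V)) (hG : G = Gsub K V β ∨ G = Gsup K V β)
    (f g : Submodule K V → Submodule K V)
    (hbij : Set.BijOn f G G) (hinv : Set.InvOn g f G G)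
    (hf : ∀ B : Set V, IsBasisSet K V B → ∃ B' : Set V, IsBasisSet K V B' ∧
      f '' apartmentOf K V G B = apartmentOf K V G B')
    (hg : ∀ B : Set V, IsBasisSet K V B → ∃ B' : Set V, IsBasisSet K V B' ∧
      g '' apartmentOf K V G B = apartmentOf K V G B') :
    ∀ X ∈ G, ∀ Y ∈ G, (AdjacentSub K V X Y ↔ AdjacentSub K V (f X) (f Y)) := by
  have h2β : (2 : Cardinal) ≤ β := by
    refine le_trans ?_ (Order.succ_le_of_lt hβ1)
    rw [← one_add_one_eq_two]
    exact Cardinal.add_one_le_succ 1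
  have h2α : (2 : Cardinal) ≤ Module.rank K V := by
    refine le_trans ?_ hα
    have h2 := (Cardinal.nat_lt_aleph0.{v} 2).le
    simpa using h2
  have hGGex : ∃ μ ν : Cardinal.{v}, S9.GoodG (K := K) (V := V) G μ ν := by
    rcases hG with rfl | rfl
    · exact ⟨β, Module.rank K V,
        ⟨fun X => Iff.rfl, h2β, h2α, Cardinal.add_eq_right hα hβ, hα⟩⟩
    · exact ⟨Module.rank K V, β,
        ⟨fun X => Iff.rfl, h2α, h2β, Cardinal.add_eq_left hα hβ, hα⟩⟩
  obtain ⟨μ, ν, hGG⟩ := hGGex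
  intro X hX Y hY
  constructor
  · exact S9.key hGG hbij hinv hf hg hX hY
  · intro hadj'
    have hgbij := S9.invOn_bijOn hbij hinv
    have h2 := S9.key hGG hgbij hinv.symm hg hf (hbij.mapsTo hX) (hbij.mapsTo hY) hadj'
    rwa [hinv.1 hX, hinv.1 hY] at h2
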